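/- Let A be a p-adically complete, p-torsion-free O_C-algebra containing a topologically nilpotent non-zero-divisor e, and ρ ∈ O_C with v_p(ρ) ≥ 1/(p−1). Let M = A[ρX]^∧_pd with γ acting by γ(X) = X + e. Then the image of (γ − 1) on M equals ρ·e·M; consequently the group cohomology H^1(Z_p·γ, M), computed by the two-term Koszul complex M → M, x ↦ γ(x) − x, is isomorphic to M/ρeM. -/

import Mathlib

open Filter Topology


section AuxLemmas

variable {A : Type*} [CommRing A] [UniformSpace A] [IsUniformAddGroup A]
    [IsTopologicalRing A] {I : Ideal A}

lemma aux_isOpen (hadic : IsAdic I) (n : ℕ) : IsOpen ((I ^ n : Ideal A) : Set A) :=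
  (isAdic_iff.mp hadic).1 n

lemma aux_isClosed (hadic : IsAdic I) (n : ℕ) : IsClosed ((I ^ n : Ideal A) : Set A) :=
  AddSubgroup.isClosed_of_isOpen (I ^ n).toAddSubgroup (aux_isOpen hadic n)

lemma aux_tendsto_iff (hadic : IsAdic I) {f : ℕ → A} :
    Tendsto f atTop (𝓝 0) ↔ ∀ n : ℕ, ∀ᶠ i in atTop, f i ∈ I ^ n := by
  constructor
  · intro h n
    exact h ((aux_isOpen hadic n).mem_nhds (zero_mem _))
  · intro h
    rw [Filter.tendsto_def]
    intro s hs
    obtain ⟨n, hn⟩ := (isAdic_iff.mp hadic).2 s hs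
    filter_upwards [h n] with i hi using hn hi

lemma aux_summable [CompleteSpace A] (hadic : IsAdic I) {β : Type*} {f : β → A}
    (h : ∀ n : ℕ, ∀ᶠ x in cofinite, f x ∈ I ^ n) : Summable f := by
  rw [summable_iff_vanishing]
  intro s hs
  obtain ⟨n, hn⟩ := (isAdic_iff.mp hadic).2 s hs
  have hfin : {x | ¬ f x ∈ I ^ n}.Finite := by
    simpa [Filter.eventually_cofinite] using h n
  classical
  refine ⟨hfin.toFinset, fun t ht => hn ?_⟩
  refine Ideal.sum_mem _ fun b hb => ?_
  by_contra hmem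
  exact (Finset.disjoint_left.mp ht) hb (hfin.mem_toFinset.mpr hmem)

lemma aux_tsum_mem [T2Space A] (hadic : IsAdic I) {β : Type*} {f : β → A} (n : ℕ)
    (h : ∀ x, f x ∈ I ^ n) : (∑' x, f x) ∈ I ^ n := by
  by_cases hs : Summable f
  · exact (aux_isClosed hadic n).mem_of_tendsto hs.hasSum
      (Filter.Eventually.of_forall fun t => Ideal.sum_mem _ fun b _ => h b)
  · rw [tsum_eq_zero_of_not_summable hs]; exact zero_mem _

end AuxLemmas


lemma aux_unit (p : ℕ) [Fact (Nat.Prime p)] {A : Type*} [CommRing A] [Algebra ℤ_[p] A]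
    {u : ℕ} (hu : ¬ p ∣ u) : IsUnit (u : A) := by
  have h1 : IsUnit (u : ℤ_[p]) := by
    rw [PadicInt.isUnit_iff]
    refine le_antisymm (PadicInt.norm_le_one _) ?_
    by_contra h
    push_neg at h
    have h2 : ‖((u : ℤ) : ℤ_[p])‖ < 1 := by push_cast; exact h
    rw [PadicInt.norm_int_lt_one_iff_dvd] at h2
    exact hu (Int.natCast_dvd_natCast.mp h2)
  have := h1.map (algebraMap ℤ_[p] A)
  rwa [map_natCast] at this

lemma aux_div (p : ℕ) [Fact (Nat.Prime p)] {A : Type*} [CommRing A] [Algebra ℤ_[p] A]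
    (htor : ∀ x : A, (p : A) * x = 0 → x = 0)
    (ρ c₀ : A) (hc₀ : ρ ^ (p - 1) = (p : A) * c₀)
    (ρpd : ℕ → A) (hρpdfac : ∀ m : ℕ, (m.factorial : A) * ρpd m = ρ ^ m)
    (m : ℕ) : ∃ t : A, ρpd (m + 1) = ρ * t := by
  have hp := (Fact.out : Nat.Prime p)
  set n := m + 1 with hn
  set v := padicValNat p n.factorial with hv
  set u := n.factorial / p ^ v with hu
  have hvfac : v = (n.factorial).factorization p := by
    rw [hv, Nat.factorization_def _ hp]
  have hfac : n.factorial = p ^ v * u := by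
    rw [hu, hvfac]
    exact (Nat.ordProj_mul_ordCompl_eq_self n.factorial p).symm
  have hpu : ¬ p ∣ u := by
    rw [hu, hvfac]
    exact Nat.not_dvd_ordCompl hp (Nat.factorial_ne_zero n)
  -- Legendre bound : (p-1)*v ≤ m
  have hdig : 1 ≤ (p.digits n).sum := by
    have hne : p.digits n ≠ [] := Nat.digits_ne_nil_iff_ne_zero.mpr (by omega)
    have hlast := Nat.getLast_digit_ne_zero p (show n ≠ 0 by omega)
    have hmem : (p.digits n).getLast hne ∈ p.digits n := List.getLast_mem hne
    calc 1 ≤ (p.digits n).getLast hne := by omega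
      _ ≤ (p.digits n).sum := List.single_le_sum (fun x _ => Nat.zero_le x) _ hmem
  have hvle : (p - 1) * v ≤ m := by
    have hleg := sub_one_mul_padicValNat_factorial (p := p) n
    rw [← hv] at hleg
    omega
  -- cancellation of powers of p
  have hcan0 : ∀ (w : ℕ) (x : A), (p : A) ^ w * x = 0 → x = 0 := by
    intro w
    induction w with
    | zero => intro x h; simpa using h
    | succ w ih =>
      intro x h
      refine ih x (htor _ ?_)
      rw [pow_succ] at h
      linear_combination h
  -- key identity
  obtain ⟨U, hU⟩ := aux_unit p (A := A) hpu
  refine ⟨(↑U⁻¹ : A) * (c₀ ^ v * ρ ^ (m - (p - 1) * v)), ?_⟩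
  have key : (p : A) ^ v * ((u : A) * ρpd n) =
      (p : A) ^ v * (c₀ ^ v * (ρ * ρ ^ (m - (p - 1) * v))) := by
    have h1 : ((n.factorial : ℕ) : A) * ρpd n = ρ ^ n := hρpdfac n
    have h2 : ((n.factorial : ℕ) : A) = (p : A) ^ v * (u : A) := by
      rw [hfac]; push_cast; ring
    have h3 : ρ ^ n = (ρ ^ (p - 1)) ^ v * ρ ^ (m - (p - 1) * v) * ρ := by
      rw [← pow_mul, ← pow_add, ← pow_succ]
      congr 1
      omega
    rw [h2] at h1
    rw [mul_assoc] at h1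
    rw [h1, h3, hc₀, mul_pow]
    ring
  have key2 : (u : A) * ρpd n = c₀ ^ v * (ρ * ρ ^ (m - (p - 1) * v)) := by
    have h0 : (p : A) ^ v * ((u : A) * ρpd n - c₀ ^ v * (ρ * ρ ^ (m - (p - 1) * v))) = 0 := by
      linear_combination key
    have := hcan0 v _ h0
    linear_combination this
  calc ρpd n = (↑U⁻¹ : A) * ((↑U : A) * ρpd n) := by
        rw [← mul_assoc, Units.inv_mul, one_mul]
    _ = ρ * ((↑U⁻¹ : A) * (c₀ ^ v * ρ ^ (m - (p - 1) * v))) := by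
        rw [hU, key2]; ring

theorem stmt_3 (p : ℕ) [Fact (Nat.Prime p)]
    (A : Type*) [CommRing A] [UniformSpace A] [IsUniformAddGroup A]
    [IsTopologicalRing A] [CompleteSpace A] [T2Space A]
    [Algebra ℤ_[p] A]
    (hadic : IsAdic (Ideal.span {(p : A)}))
    (htor : ∀ x : A, (p : A) * x = 0 → x = 0)
    (ρ : A) (hρ : ∃ c : A, ρ ^ (p - 1) = (p : A) * c)
    (ρpd : ℕ → A) (hρpd0 : ρpd 0 = 1) (hρpd1 : ρpd 1 = ρ)
    (hρpdfac : ∀ m : ℕ, (m.factorial : A) * ρpd m = ρ ^ m)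
    (e : A) (he : Tendsto (fun n : ℕ => e ^ n) atTop (𝓝 0))
    (hereg : ∀ x : A, e * x = 0 → x = 0) :
    ∀ b : ℕ → A, Tendsto b atTop (𝓝 0) →
      ((∃ a : ℕ → A, Tendsto a atTop (𝓝 0) ∧
          ∀ i : ℕ, (∑' m : ℕ, ρpd m * e ^ m * a (i + m)) - a i = b i) ↔
        (∃ c : ℕ → A, Tendsto c atTop (𝓝 0) ∧ ∀ i : ℕ, b i = ρ * e * c i)) := by
  intro b hb
  set I : Ideal A := Ideal.span {(p : A)} with hI
  obtain ⟨c₀, hc₀⟩ := hρ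
  -- the q-sequence: ρpd (m+1) = ρ * q m, q 0 = 1
  obtain ⟨q0, hq0⟩ : ∃ q : ℕ → A, ∀ m, ρpd (m + 1) = ρ * q m :=
    ⟨fun m => (aux_div p htor ρ c₀ hc₀ ρpd hρpdfac m).choose,
     fun m => (aux_div p htor ρ c₀ hc₀ ρpd hρpdfac m).choose_spec⟩
  set q : ℕ → A := fun m => if m = 0 then 1 else q0 m with hqdef
  have hq : ∀ m, ρpd (m + 1) = ρ * q m := by
    intro m
    rcases Nat.eq_zero_or_pos m with h | h
    · subst h; simp [hqdef, hρpd1]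
    · have : m ≠ 0 := by omega
      simp [hqdef, this, hq0 m]
  have hqzero : q 0 = 1 := by simp [hqdef]
  -- powers of e eventually in I^n
  have hepow : ∀ n : ℕ, ∃ K : ℕ, ∀ k ≥ K, e ^ k ∈ I ^ n := by
    intro n
    exact (Filter.eventually_atTop.mp (((aux_tendsto_iff hadic).mp he) n))
  -- key summability: any sequence whose m-th term carries e^(m + s)
  have hsummable : ∀ (g : ℕ → A) (s : ℕ → ℕ), (∀ n, ∀ᶠ m in atTop, n ≤ s m) →
      (∀ m, ∃ r r' : A, g m = r * e ^ (s m) * r') → Summable g := by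
    intro g s hs hg
    refine aux_summable hadic fun n => ?_
    rw [Nat.cofinite_eq_atTop]
    obtain ⟨K, hK⟩ := hepow n
    filter_upwards [hs K] with m hm
    obtain ⟨r, r', hr⟩ := hg m
    rw [hr]
    exact Ideal.mul_mem_right _ _ (Ideal.mul_mem_left _ _ (hK _ hm))
  constructor
  · -- forward
    rintro ⟨a, ha, haeq⟩
    refine ⟨fun i => ∑' m : ℕ, q m * e ^ m * a (i + 1 + m), ?_, ?_⟩
    · -- null
      rw [aux_tendsto_iff hadic]
      intro n
      obtain ⟨J, hJ⟩ := Filter.eventually_atTop.mp (((aux_tendsto_iff hadic).mp ha) n)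
      rw [Filter.eventually_atTop]
      refine ⟨J, fun i hi => aux_tsum_mem hadic n fun m => ?_⟩
      exact Ideal.mul_mem_left _ _ (hJ _ (by omega))
    · intro i
      have hsum : Summable (fun m => ρpd m * e ^ m * a (i + m)) :=
        hsummable _ (fun m => m) (fun n => Filter.eventually_atTop.mpr ⟨n, fun m hm => hm⟩)
          (fun m => ⟨ρpd m, a (i + m), by ring⟩)
      have hsum2 : Summable (fun m => q m * e ^ m * a (i + 1 + m)) :=
        hsummable _ (fun m => m) (fun n => Filter.eventually_atTop.mpr ⟨n, fun m hm => hm⟩)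
          (fun m => ⟨q m, a (i + 1 + m), by ring⟩)
      calc b i = (∑' m : ℕ, ρpd m * e ^ m * a (i + m)) - a i := (haeq i).symm
        _ = (ρpd 0 * e ^ 0 * a (i + 0)
              + ∑' m : ℕ, ρpd (m + 1) * e ^ (m + 1) * a (i + (m + 1))) - a i := by
            rw [Summable.tsum_eq_zero_add hsum]
        _ = ∑' m : ℕ, ρpd (m + 1) * e ^ (m + 1) * a (i + (m + 1)) := by
            rw [hρpd0]; simp
        _ = ∑' m : ℕ, (ρ * e) * (q m * e ^ m * a (i + 1 + m)) := by
            refine tsum_congr fun m => ?_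
            rw [hq m, show i + (m + 1) = i + 1 + m from by omega, pow_succ]
            ring
        _ = (ρ * e) * ∑' m : ℕ, q m * e ^ m * a (i + 1 + m) :=
            Summable.tsum_mul_left _ hsum2
  · -- reverse
    rintro ⟨c, hc, hbc⟩
    classical
    -- shifted sequence operator
    set Sstar : (ℕ → A) → (ℕ → A) := fun x i => Nat.rec 0 (fun j _ => x j) i with hSstardef
    have hSstarS : ∀ (x : ℕ → A) (j : ℕ), Sstar x (j + 1) = x j := fun x j => rfl
    -- the remainder operator
    set R : (ℕ → A) → (ℕ → A) := fun x i => ∑' j : ℕ, q (j + 1) * e ^ j * x (i + 2 + j)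
      with hRdef
    -- successive approximations
    set y : ℕ → ℕ → A :=
      fun k => Nat.rec (Sstar c) (fun _ yk => Sstar (fun i => -(R yk i))) k with hydef
    have hy0 : y 0 = Sstar c := rfl
    have hyS : ∀ k, y (k + 1) = Sstar (fun i => -(R (y k) i)) := fun k => rfl
    -- each y k is null
    have hynull : ∀ k n : ℕ, ∃ J : ℕ, ∀ i ≥ J, y k i ∈ I ^ n := by
      intro k
      induction k with
      | zero =>
        intro n
        obtain ⟨J, hJ⟩ := Filter.eventually_atTop.mp (((aux_tendsto_iff hadic).mp hc) n)
        refine ⟨J + 1, fun i hi => ?_⟩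
        obtain ⟨j, rfl⟩ : ∃ j, i = j + 1 := ⟨i - 1, by omega⟩
        have hyv : y 0 (j + 1) = c j := rfl
        rw [hyv]
        exact hJ j (by omega)
      | succ k ih =>
        intro n
        obtain ⟨J, hJ⟩ := ih n
        refine ⟨J + 1, fun i hi => ?_⟩
        obtain ⟨j, rfl⟩ : ∃ j, i = j + 1 := ⟨i - 1, by omega⟩
        have hyv : y (k + 1) (j + 1) = -(R (y k) j) := rfl
        rw [hyv]
        refine neg_mem (aux_tsum_mem hadic n fun m => ?_)
        exact Ideal.mul_mem_left _ _ (hJ _ (by omega))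
    -- the solution
    set a : ℕ → A := fun i => ∑' k : ℕ, e ^ k * y k i with hadef
    have haeval : ∀ i, a i = ∑' k : ℕ, e ^ k * y k i := fun i => rfl
    have hsumak : ∀ j : ℕ, Summable (fun k : ℕ => e ^ k * y k j) := fun j =>
      hsummable _ (fun k => k) (fun n => Filter.eventually_atTop.mpr ⟨n, fun m hm => hm⟩)
        (fun k => ⟨1, y k j, by ring⟩)
    have hsumR : ∀ (x : ℕ → A) (i : ℕ), Summable (fun j : ℕ => q (j + 1) * e ^ j * x (i + 2 + j)) :=
      fun x i => hsummable _ (fun j => j) (fun n => Filter.eventually_atTop.mpr ⟨n, fun m hm => hm⟩)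
        (fun j => ⟨q (j + 1), x (i + 2 + j), by ring⟩)
    refine ⟨a, ?_, ?_⟩
    · -- a is null
      rw [aux_tendsto_iff hadic]
      intro n
      obtain ⟨K, hK⟩ := hepow n
      choose Jf hJf using fun k => hynull k n
      rw [Filter.eventually_atTop]
      refine ⟨(Finset.range K).sup Jf, fun i hi => aux_tsum_mem hadic n fun k => ?_⟩
      by_cases hk : K ≤ k
      · exact Ideal.mul_mem_right _ _ (hK k hk)
      · have hle : Jf k ≤ (Finset.range K).sup Jf :=
          Finset.le_sup (Finset.mem_range.mpr (by omega))
        exact Ideal.mul_mem_left _ _ (hJf k i (le_trans hle hi))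
    · intro i
      -- summabilities
      have hsumA : Summable (fun m => ρpd m * e ^ m * a (i + m)) :=
        hsummable _ (fun m => m) (fun n => Filter.eventually_atTop.mpr ⟨n, fun m hm => hm⟩)
          (fun m => ⟨ρpd m, a (i + m), by ring⟩)
      have hsum3 : Summable (fun m => q m * e ^ m * a (i + 1 + m)) :=
        hsummable _ (fun m => m) (fun n => Filter.eventually_atTop.mpr ⟨n, fun m hm => hm⟩)
          (fun m => ⟨q m, a (i + 1 + m), by ring⟩)
      -- the key identity : ∑' m, q m * e^m * a (i+1+m) = c i
      have key : (∑' m : ℕ, q m * e ^ m * a (i + 1 + m)) = c i := by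
        have hsplit : (∑' m : ℕ, q m * e ^ m * a (i + 1 + m))
            = a (i + 1) + ∑' j : ℕ, q (j + 1) * e ^ (j + 1) * a (i + 2 + j) := by
          rw [Summable.tsum_eq_zero_add hsum3]
          congr 1
          · rw [hqzero]; simp
          · exact tsum_congr fun j => by rw [show i + 1 + (j + 1) = i + 2 + j from by omega]
        have hA1 : a (i + 1) = c i - ∑' k : ℕ, e ^ (k + 1) * R (y k) i := by
          rw [haeval, Summable.tsum_eq_zero_add (hsumak (i + 1))]
          have h0 : e ^ 0 * y 0 (i + 1) = c i := by
            have hyv : y 0 (i + 1) = c i := rfl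
            rw [hyv, pow_zero, one_mul]
          have h1 : (∑' k : ℕ, e ^ (k + 1) * y (k + 1) (i + 1))
              = ∑' k : ℕ, -(e ^ (k + 1) * R (y k) i) := by
            refine tsum_congr fun k => ?_
            have hyv : y (k + 1) (i + 1) = -(R (y k) i) := rfl
            rw [hyv]
            ring
          rw [h0, h1, tsum_neg]
          ring
        have hF : Summable (Function.uncurry
            (fun j k : ℕ => q (j + 1) * e ^ (j + 1) * (e ^ k * y k (i + 2 + j)))) := by
          refine aux_summable hadic fun n => ?_
          obtain ⟨K, hK⟩ := hepow n
          rw [Filter.eventually_cofinite]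
          refine Set.Finite.subset ((Set.finite_Iio K).prod (Set.finite_Iio K)) ?_
          rintro ⟨j, k⟩ h
          simp only [Set.mem_setOf_eq, Function.uncurry_apply_pair] at h
          have hj : j < K := by
            by_contra hj
            push_neg at hj
            exact h (Ideal.mul_mem_right _ _ (Ideal.mul_mem_left _ _ (hK (j + 1) (by omega))))
          have hk : k < K := by
            by_contra hk
            push_neg at hk
            exact h (Ideal.mul_mem_left _ _ (Ideal.mul_mem_right _ _ (hK k hk)))
          exact Set.mem_prod.mpr ⟨hj, hk⟩
        have hA2 : (∑' j : ℕ, q (j + 1) * e ^ (j + 1) * a (i + 2 + j))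
            = ∑' k : ℕ, e ^ (k + 1) * R (y k) i := by
          have e1 : ∀ j : ℕ, q (j + 1) * e ^ (j + 1) * a (i + 2 + j)
              = ∑' k : ℕ, q (j + 1) * e ^ (j + 1) * (e ^ k * y k (i + 2 + j)) := by
            intro j
            rw [haeval, Summable.tsum_mul_left _ (hsumak (i + 2 + j))]
          rw [tsum_congr e1, ← Summable.tsum_comm hF]
          refine tsum_congr fun k => ?_
          have e2 : ∀ j : ℕ, q (j + 1) * e ^ (j + 1) * (e ^ k * y k (i + 2 + j))
              = e ^ (k + 1) * (q (j + 1) * e ^ j * y k (i + 2 + j)) := by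
            intro j
            rw [pow_succ, pow_succ]
            ring
          rw [tsum_congr e2, Summable.tsum_mul_left _ (hsumR (y k) i)]
        rw [hsplit, hA1, hA2]
        ring
      calc (∑' m : ℕ, ρpd m * e ^ m * a (i + m)) - a i
          = (ρpd 0 * e ^ 0 * a (i + 0)
              + ∑' m : ℕ, ρpd (m + 1) * e ^ (m + 1) * a (i + (m + 1))) - a i := by
            rw [Summable.tsum_eq_zero_add hsumA]
        _ = ∑' m : ℕ, ρpd (m + 1) * e ^ (m + 1) * a (i + (m + 1)) := by
            rw [hρpd0]; simp
        _ = ∑' m : ℕ, (ρ * e) * (q m * e ^ m * a (i + 1 + m)) := by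
            refine tsum_congr fun m => ?_
            rw [hq m, show i + (m + 1) = i + 1 + m from by omega, pow_succ]
            ring
        _ = (ρ * e) * ∑' m : ℕ, q m * e ^ m * a (i + 1 + m) :=
            Summable.tsum_mul_left _ hsum3
        _ = (ρ * e) * c i := by rw [key]
        _ = b i := (hbc i).symm
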